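/- (H-finiteness of the frontier is independent of the generating set) Let G be a group with two finite generating sets S and S', let H ≤ G, and let U ⊆ G be an H-invariant subset (hU = U for all h ∈ H). For a finite generating set T of G, define the T-frontier of U as {u ∈ U : ut ∉ U for some t ∈ T ∪ T⁻¹}. If the S-frontier of U is contained in H·F for some finite subset F ⊆ G, then the S'-frontier of U is contained in H·F' for some finite subset F' ⊆ G. -/
import Mathlib


open Pointwise

/-- The frontier of `A ⊆ G` with respect to the finite generating set `T`. -/
def frontierIn {G : Type*} [Group G] (T : Finset G) (A : Set G) : Set G :=
  {a : G | a ∈ A ∧ ∃ t : G, (t ∈ T ∨ t⁻¹ ∈ T) ∧ a * t ∉ A}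

/-- **`H`-finiteness of the frontier is independent of the generating set.**  Let `G` be
generated by each of the finite sets `S` and `S'`, let `H ≤ G`, and let `U ⊆ G` be
`H`-invariant.  If the `S`-frontier of `U` is contained in `H·F` for some finite `F`, then
the `S'`-frontier of `U` is contained in `H·F'` for some finite `F'`. -/
theorem frontier_hfiniteness_independent_of_generating_set
    {G : Type*} [Group G]
    (S S' : Finset G)
    (hS : Subgroup.closure (S : Set G) = ⊤)
    (hS' : Subgroup.closure (S' : Set G) = ⊤)
    (H : Subgroup G) (U : Set G)
    (hU : ∀ h ∈ H, h • U = U)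
    (F : Finset G) (hF : frontierIn S U ⊆ (H : Set G) * (F : Set G)) :
    ∃ F' : Finset G, frontierIn S' U ⊆ (H : Set G) * (F' : Set G) := by
  classical
  have key : ∀ g : G, ∃ P : Finset G,
      (∀ u, u ∈ U → u * g ∉ U → ∃ p ∈ P, u * p ∈ frontierIn S U) ∧
      (∀ u, u ∉ U → u * g ∈ U → ∃ p ∈ P, u * p ∈ frontierIn S U) := by
    intro g
    have hg : g ∈ Subgroup.closure (S : Set G) := by rw [hS]; trivial
    induction hg using Subgroup.closure_induction with
    | mem s hs =>
      refine ⟨{1, s}, ?_, ?_⟩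
      · intro u hu hus
        exact ⟨1, by simp, by simpa [frontierIn] using ⟨hu, s, Or.inl hs, hus⟩⟩
      · intro u hu hus
        refine ⟨s, by simp, ⟨hus, s⁻¹, Or.inr (by simpa using hs), by simpa using hu⟩⟩
    | one =>
      exact ⟨∅, fun u hu hu1 => absurd (by simpa using hu) hu1,
        fun u hu hu1 => absurd (by simpa using hu1) hu⟩
    | mul g g' _ _ ih ih' =>
      obtain ⟨P, h1, h2⟩ := ih
      obtain ⟨P', h1', h2'⟩ := ih'
      refine ⟨P ∪ P'.image (g * ·), ?_, ?_⟩
      · intro u hu hug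
        by_cases hmid : u * g ∈ U
        · obtain ⟨p, hp, hfr⟩ := h1' (u * g) hmid (by rwa [mul_assoc])
          exact ⟨g * p, Finset.mem_union_right _ (Finset.mem_image_of_mem _ hp),
            by rwa [← mul_assoc]⟩
        · obtain ⟨p, hp, hfr⟩ := h1 u hu hmid
          exact ⟨p, Finset.mem_union_left _ hp, hfr⟩
      · intro u hu hug
        by_cases hmid : u * g ∈ U
        · obtain ⟨p, hp, hfr⟩ := h2 u hu hmid
          exact ⟨p, Finset.mem_union_left _ hp, hfr⟩
        · obtain ⟨p, hp, hfr⟩ := h2' (u * g) hmid (by rwa [mul_assoc])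
          exact ⟨g * p, Finset.mem_union_right _ (Finset.mem_image_of_mem _ hp),
            by rwa [← mul_assoc]⟩
    | inv g _ ih =>
      obtain ⟨P, h1, h2⟩ := ih
      refine ⟨P.image (g⁻¹ * ·), ?_, ?_⟩
      · intro u hu hug
        obtain ⟨p, hp, hfr⟩ := h2 (u * g⁻¹) hug (by simpa using hu)
        exact ⟨g⁻¹ * p, Finset.mem_image_of_mem _ hp, by rwa [← mul_assoc]⟩
      · intro u hu hug
        obtain ⟨p, hp, hfr⟩ := h1 (u * g⁻¹) hug (by simpa using hu)
        exact ⟨g⁻¹ * p, Finset.mem_image_of_mem _ hp, by rwa [← mul_assoc]⟩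
  choose P hP1 _ using key
  refine ⟨F * ((S'.biUnion fun s => P s ∪ P s⁻¹).image (·⁻¹)), ?_⟩
  rintro u ⟨hu, t, ht, hut⟩
  obtain ⟨p, hp, hfr⟩ := hP1 t u hu hut
  obtain ⟨h, hh, f, hf, heq⟩ := hF hfr
  have hpmem : p ∈ S'.biUnion fun s => P s ∪ P s⁻¹ := by
    rcases ht with ht | ht
    · exact Finset.mem_biUnion.2 ⟨t, ht, Finset.mem_union_left _ hp⟩
    · exact Finset.mem_biUnion.2 ⟨t⁻¹, ht, Finset.mem_union_right _ (by simpa using hp)⟩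
  refine ⟨h, hh, f * p⁻¹, ?_, ?_⟩
  · rw [Finset.coe_mul]
    exact Set.mul_mem_mul hf (by simpa using Finset.mem_image_of_mem (·⁻¹) hpmem)
  · have heq' : h * f = u * p := heq
    show h * (f * p⁻¹) = u
    rw [← mul_assoc, heq', mul_assoc, mul_inv_cancel, mul_one]
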